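/- Let R, M > 0 and let Ω : ℝ² × [−R,R] → ℝ be continuous, continuously differentiable in its second argument, and satisfy b(y_⊥)² (|Ω(y_⊥,ρ)| + |∂_ρΩ(y_⊥,ρ)|) ≤ M for all y_⊥ ∈ ℝ² and |ρ| ≤ R. Let ψ : ℝ → [−R,R] be continuously differentiable with bounded derivative. Define the three-dimensional velocity field Ũ(x) = (1/(4π)) ∫_{ℝ³} |x−y|^{−3} (y₂−x₂, x₁−y₁) Ω(y_⊥, ψ(y₃)) dy and, for each x₃, the two-dimensional velocity field U(x_⊥, x₃) = (1/(2π)) ∫_{ℝ²} |x_⊥−y_⊥|^{−2} (y₂−x₂, x₁−y₁) Ω(y_⊥, ψ(x₃)) dy_⊥. Then there exists a constant C > 0, independent of Ω, ψ, R, M, such that sup_{x∈ℝ³} |Ũ(x) − U(x_⊥,x₃)| ≤ C M sup_{z∈ℝ} |ψ'(z)|, and moreover sup_{x∈ℝ³} |Ũ(x)| ≤ C M. -/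

import Mathlib

open Real MeasureTheory
open scoped ENNReal

noncomputable section

/-- Points of `ℝ³`, written as (horizontal part, vertical coordinate). -/
abbrev P3 := (ℝ × ℝ) × ℝ

/-- The weight `b(x₁,x₂) = (1+x₁²)^{1/2} (1+x₂²)^{1/2}` on `ℝ²`. -/
def bw (x : ℝ × ℝ) : ℝ := Real.sqrt (1 + x.1 ^ 2) * Real.sqrt (1 + x.2 ^ 2)

/-- `|x − y|³` on `ℝ³`. -/
def d3 (x y : P3) : ℝ :=
  ((x.1.1 - y.1.1) ^ 2 + (x.1.2 - y.1.2) ^ 2 + (x.2 - y.2) ^ 2) ^ ((3 : ℝ) / 2)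

/-- The horizontal components of the three-dimensional Biot–Savart velocity of the
vertical vorticity field `Ω(y_⊥, ψ(y₃)) e₃`. -/
def Ut (Ω : ℝ × ℝ → ℝ → ℝ) (ψ : ℝ → ℝ) (x : P3) : ℝ × ℝ :=
  (4 * π)⁻¹ •
    ∫ y : P3, (Ω y.1 (ψ y.2) / d3 x y) • ((y.1.2 - x.1.2, x.1.1 - y.1.1) : ℝ × ℝ)

/-- The two-dimensional Biot–Savart velocity of the horizontal slice at height `x₃`. -/
def Uslice (Ω : ℝ × ℝ → ℝ → ℝ) (ψ : ℝ → ℝ) (x : P3) : ℝ × ℝ :=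
  (2 * π)⁻¹ •
    ∫ yp : ℝ × ℝ,
      (Ω yp (ψ x.2) / ((x.1.1 - yp.1) ^ 2 + (x.1.2 - yp.2) ^ 2)) •
        ((yp.2 - x.1.2, x.1.1 - yp.1) : ℝ × ℝ)

open Set Filter
open scoped Topology

variable {q : ℝ}

lemma aux_eq (hq : 0 < q) (s : ℝ) :
    (q + s ^ 2)⁻¹ = q⁻¹ * (1 + (s / Real.sqrt q) ^ 2)⁻¹ := by
  have h : Real.sqrt q ^ 2 = q := Real.sq_sqrt hq.le
  have hs : Real.sqrt q ≠ 0 := by positivity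
  rw [div_pow, h, ← mul_inv]
  congr 1
  field_simp

lemma integrable_invQ (hq : 0 < q) : Integrable fun s : ℝ => (q + s ^ 2)⁻¹ := by
  simp_rw [aux_eq hq]
  have hs : Real.sqrt q ≠ 0 := by positivity
  exact (integrable_inv_one_add_sq.comp_div hs).const_mul _

lemma integral_invQ (hq : 0 < q) :
    ∫ s : ℝ, (q + s ^ 2)⁻¹ = π * (Real.sqrt q)⁻¹ := by
  have hs : (0:ℝ) < Real.sqrt q := Real.sqrt_pos.2 hq
  simp_rw [aux_eq hq]
  rw [integral_const_mul,
    MeasureTheory.Measure.integral_comp_div (fun u : ℝ => (1 + u ^ 2)⁻¹) (Real.sqrt q),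
    integral_univ_inv_one_add_sq, abs_of_pos hs, smul_eq_mul]
  have h : Real.sqrt q * Real.sqrt q = q := Real.mul_self_sqrt hq.le
  field_simp
  nlinarith [h, Real.pi_pos]

lemma contF1 (hq : 0 < q) : Continuous (fun s : ℝ => -((q + s ^ 2) ^ (-(1:ℝ)/2))) :=
  ((continuous_const.add (continuous_pow 2)).rpow_const
    (fun s => Or.inl (ne_of_gt (add_pos_of_pos_of_nonneg hq (sq_nonneg s))))).neg

lemma hasDerivAt_F1 (hq : 0 < q) (s : ℝ) :
    HasDerivAt (fun s : ℝ => -((q + s ^ 2) ^ (-(1:ℝ)/2)))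
      (s * ((q + s ^ 2) ^ ((3:ℝ)/2))⁻¹) s := by
  have hpos : 0 < q + s ^ 2 := by positivity
  have h1 : HasDerivAt (fun s : ℝ => q + s ^ 2) (2 * s) s := by
    simpa using (hasDerivAt_pow 2 s).const_add q
  have h2 : HasDerivAt (fun u : ℝ => u ^ (-(1:ℝ)/2))
      ((-(1:ℝ)/2) * (q + s ^ 2) ^ (-(1:ℝ)/2 - 1)) (q + s ^ 2) :=
    Real.hasDerivAt_rpow_const (Or.inl hpos.ne')
  have h3 := (h2.comp s h1).neg
  convert h3 using 1
  · rfl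
  · rfl
  · rfl
  have he : (-(1:ℝ)/2 - 1) = -((3:ℝ)/2) := by norm_num
  rw [he, Real.rpow_neg hpos.le]
  ring

lemma tendsto_F1 (hq : 0 < q) :
    Tendsto (fun s : ℝ => -((q + s ^ 2) ^ (-(1:ℝ)/2))) atTop (𝓝 0) := by
  rw [show (0:ℝ) = -0 by norm_num]
  apply Tendsto.neg
  have h1 : Tendsto (fun s : ℝ => q + s ^ 2) atTop atTop :=
    tendsto_atTop_add_const_left _ q (tendsto_pow_atTop two_ne_zero)
  have h2 : Tendsto (fun u : ℝ => u ^ (-(1:ℝ)/2)) atTop (𝓝 0) := by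
    have := tendsto_rpow_neg_atTop (y := (1:ℝ)/2) (by norm_num)
    simpa [neg_div] using this
  exact h2.comp h1

lemma integrableOn_Ioi_smul32 (hq : 0 < q) :
    IntegrableOn (fun s : ℝ => s * ((q + s ^ 2) ^ ((3:ℝ)/2))⁻¹) (Ioi 0) :=
  integrableOn_Ioi_deriv_of_nonneg (contF1 hq).continuousWithinAt
    (fun t _ => hasDerivAt_F1 hq t)
    (fun t ht => mul_nonneg (le_of_lt ht) (by positivity)) (tendsto_F1 hq)

lemma integral_Ioi_smul32 (hq : 0 < q) :
    ∫ s in Ioi (0:ℝ), s * ((q + s ^ 2) ^ ((3:ℝ)/2))⁻¹ = (Real.sqrt q)⁻¹ := by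
  rw [integral_Ioi_of_hasDerivAt_of_nonneg (contF1 hq).continuousWithinAt
    (fun t _ => hasDerivAt_F1 hq t)
    (fun t ht => mul_nonneg (le_of_lt ht) (by positivity)) (tendsto_F1 hq)]
  rw [Real.sqrt_eq_rpow, ← Real.rpow_neg hq.le]
  norm_num

lemma contF2 (hq : 0 < q) :
    Continuous (fun s : ℝ => q⁻¹ * (s * (q + s ^ 2) ^ (-(1:ℝ)/2))) :=
  continuous_const.mul (continuous_id.mul
    ((continuous_const.add (continuous_pow 2)).rpow_const
      (fun s => Or.inl (ne_of_gt (add_pos_of_pos_of_nonneg hq (sq_nonneg s))))))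

lemma hasDerivAt_F2 (hq : 0 < q) (s : ℝ) :
    HasDerivAt (fun s : ℝ => q⁻¹ * (s * (q + s ^ 2) ^ (-(1:ℝ)/2)))
      (((q + s ^ 2) ^ ((3:ℝ)/2))⁻¹) s := by
  have hpos : 0 < q + s ^ 2 := by positivity
  have h1 : HasDerivAt (fun s : ℝ => q + s ^ 2) (2 * s) s := by
    simpa using (hasDerivAt_pow 2 s).const_add q
  have h2 : HasDerivAt (fun u : ℝ => u ^ (-(1:ℝ)/2))
      ((-(1:ℝ)/2) * (q + s ^ 2) ^ (-(1:ℝ)/2 - 1)) (q + s ^ 2) :=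
    Real.hasDerivAt_rpow_const (Or.inl hpos.ne')
  have h3 := ((hasDerivAt_id s).mul (h2.comp s h1)).const_mul q⁻¹
  convert h3 using 1
  · rfl
  · rfl
  · rfl
  have he : (-(1:ℝ)/2 - 1) = -((3:ℝ)/2) := by norm_num
  have hkey : (q + s ^ 2) ^ (-(1:ℝ)/2) = (q + s ^ 2) * (q + s ^ 2) ^ (-((3:ℝ)/2)) := by
    rw [← Real.rpow_one_add' hpos.le (by norm_num : (1:ℝ) + -((3:ℝ)/2) ≠ 0)]
    norm_num
  simp only [Function.comp_apply, id_eq] at h3 ⊢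
  rw [he, hkey, Real.rpow_neg hpos.le]
  have hne : (q + s ^ 2) ^ ((3:ℝ)/2) ≠ 0 := by positivity
  field_simp
  ring

lemma tendsto_F2 (hq : 0 < q) :
    Tendsto (fun s : ℝ => q⁻¹ * (s * (q + s ^ 2) ^ (-(1:ℝ)/2))) atTop (𝓝 q⁻¹) := by
  have key : Tendsto (fun s : ℝ => s * (q + s ^ 2) ^ (-(1:ℝ)/2)) atTop (𝓝 1) := by
    have hev : ∀ᶠ s : ℝ in atTop,
        (q / s ^ 2 + 1) ^ (-(1:ℝ)/2) = s * (q + s ^ 2) ^ (-(1:ℝ)/2) := by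
      filter_upwards [eventually_gt_atTop (0:ℝ)] with s hs
      have hs2 : (0:ℝ) < s ^ 2 := by positivity
      have : q + s ^ 2 = s ^ 2 * (q / s ^ 2 + 1) := by field_simp
      rw [this, Real.mul_rpow hs2.le (by positivity)]
      have : (s ^ 2 : ℝ) ^ (-(1:ℝ)/2) = s⁻¹ := by
        rw [show (-(1:ℝ)/2) = -(1/2) by norm_num, Real.rpow_neg hs2.le,
          ← Real.sqrt_eq_rpow, Real.sqrt_sq hs.le]
      rw [this]
      field_simp
    have h0 : Tendsto (fun s : ℝ => q / s ^ 2 + 1) atTop (𝓝 1) := by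
      have : Tendsto (fun s : ℝ => q / s ^ 2) atTop (𝓝 0) := by
        apply Tendsto.div_atTop tendsto_const_nhds
        exact tendsto_pow_atTop two_ne_zero
      simpa using this.add tendsto_const_nhds
    have hc : ContinuousAt (fun u : ℝ => u ^ (-(1:ℝ)/2)) 1 :=
      Real.continuousAt_rpow_const 1 _ (Or.inl one_ne_zero)
    have := (hc.tendsto.comp h0)
    rw [Real.one_rpow] at this
    exact Tendsto.congr' hev this
  have := key.const_mul q⁻¹
  simpa using this

lemma integrableOn_Ioi_32 (hq : 0 < q) :
    IntegrableOn (fun s : ℝ => ((q + s ^ 2) ^ ((3:ℝ)/2))⁻¹) (Ioi 0) :=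
  integrableOn_Ioi_deriv_of_nonneg (contF2 hq).continuousWithinAt
    (fun t _ => hasDerivAt_F2 hq t) (fun t _ => by positivity) (tendsto_F2 hq)

lemma integral_Ioi_32 (hq : 0 < q) :
    ∫ s in Ioi (0:ℝ), ((q + s ^ 2) ^ ((3:ℝ)/2))⁻¹ = q⁻¹ := by
  rw [integral_Ioi_of_hasDerivAt_of_nonneg (contF2 hq).continuousWithinAt
    (fun t _ => hasDerivAt_F2 hq t) (fun t _ => by positivity) (tendsto_F2 hq)]
  simp

lemma my_integrable_comp_abs {f : ℝ → ℝ} (hf : IntegrableOn (fun x => f |x|) (Ioi 0)) :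
    Integrable fun x : ℝ => f |x| := by
  have int_Iic : IntegrableOn (fun x => f |x|) (Iic 0) := by
    rw [← Measure.map_neg_eq_self (volume : Measure ℝ)]
    have m : MeasurableEmbedding fun x : ℝ => -x := (Homeomorph.neg ℝ).measurableEmbedding
    rw [m.integrableOn_map_iff]
    simp_rw [Function.comp_def, abs_neg, neg_preimage, neg_Iic, neg_zero]
    exact Iff.mpr integrableOn_Ici_iff_integrableOn_Ioi hf
  have h := int_Iic.union hf
  rwa [Iic_union_Ioi, integrableOn_univ] at h

lemma integrable32 (hq : 0 < q) :
    Integrable fun s : ℝ => ((q + s ^ 2) ^ ((3:ℝ)/2))⁻¹ := by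
  have he : (fun s : ℝ => ((q + s ^ 2) ^ ((3:ℝ)/2))⁻¹)
      = fun s : ℝ => (fun u : ℝ => ((q + u ^ 2) ^ ((3:ℝ)/2))⁻¹) |s| := by
    funext s; simp [sq_abs]
  rw [he]
  apply my_integrable_comp_abs (f := fun u : ℝ => ((q + u ^ 2) ^ ((3:ℝ)/2))⁻¹)
  exact (integrableOn_Ioi_32 hq).congr_fun
    (fun x hx => by simp [sq_abs]) measurableSet_Ioi

lemma integral32 (hq : 0 < q) :
    ∫ s : ℝ, ((q + s ^ 2) ^ ((3:ℝ)/2))⁻¹ = 2 * q⁻¹ := by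
  have he : (fun s : ℝ => ((q + s ^ 2) ^ ((3:ℝ)/2))⁻¹)
      = fun s : ℝ => (fun u : ℝ => ((q + u ^ 2) ^ ((3:ℝ)/2))⁻¹) |s| := by
    funext s; simp [sq_abs]
  rw [he, integral_comp_abs (f := fun u : ℝ => ((q + u ^ 2) ^ ((3:ℝ)/2))⁻¹),
    integral_Ioi_32 hq]

lemma integrable_abs32 (hq : 0 < q) :
    Integrable fun s : ℝ => |s| * ((q + s ^ 2) ^ ((3:ℝ)/2))⁻¹ := by
  have he : (fun s : ℝ => |s| * ((q + s ^ 2) ^ ((3:ℝ)/2))⁻¹)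
      = fun s : ℝ => (fun u : ℝ => u * ((q + u ^ 2) ^ ((3:ℝ)/2))⁻¹) |s| := by
    funext s; simp [sq_abs]
  rw [he]
  apply my_integrable_comp_abs (f := fun u : ℝ => u * ((q + u ^ 2) ^ ((3:ℝ)/2))⁻¹)
  exact (integrableOn_Ioi_smul32 hq).congr_fun
    (fun x hx => by simp [sq_abs, abs_of_pos (mem_Ioi.mp hx)]) measurableSet_Ioi

lemma integral_abs32 (hq : 0 < q) :
    ∫ s : ℝ, |s| * ((q + s ^ 2) ^ ((3:ℝ)/2))⁻¹ = 2 * (Real.sqrt q)⁻¹ := by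
  have he : (fun s : ℝ => |s| * ((q + s ^ 2) ^ ((3:ℝ)/2))⁻¹)
      = fun s : ℝ => (fun u : ℝ => u * ((q + u ^ 2) ^ ((3:ℝ)/2))⁻¹) |s| := by
    funext s; simp [sq_abs]
  rw [he, integral_comp_abs (f := fun u : ℝ => u * ((q + u ^ 2) ^ ((3:ℝ)/2))⁻¹),
    integral_Ioi_smul32 hq]

lemma key_lint1 (hq : 0 < q) (c : ℝ) :
    ∫⁻ t : ℝ, ENNReal.ofReal ((q + (c - t) ^ 2)⁻¹)
      = ENNReal.ofReal (π * (Real.sqrt q)⁻¹) := by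
  have hint : Integrable fun t : ℝ => (q + (c - t) ^ 2)⁻¹ :=
    (integrable_invQ hq).comp_sub_left c
  rw [← ofReal_integral_eq_lintegral_ofReal hint
    (Eventually.of_forall fun t => by positivity)]
  congr 1
  rw [integral_sub_left_eq_self (fun s : ℝ => (q + s ^ 2)⁻¹) volume c]
  exact integral_invQ hq

lemma key_lint2 (hq : 0 < q) (c : ℝ) :
    ∫⁻ t : ℝ, ENNReal.ofReal (|c - t| * ((q + (c - t) ^ 2) ^ ((3:ℝ)/2))⁻¹)
      = ENNReal.ofReal (2 * (Real.sqrt q)⁻¹) := by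
  have hint : Integrable fun t : ℝ => |c - t| * ((q + (c - t) ^ 2) ^ ((3:ℝ)/2))⁻¹ :=
    (integrable_abs32 hq).comp_sub_left c
  rw [← ofReal_integral_eq_lintegral_ofReal hint
    (Eventually.of_forall fun t => by positivity)]
  congr 1
  rw [integral_sub_left_eq_self (fun s : ℝ => |s| * ((q + s ^ 2) ^ ((3:ℝ)/2))⁻¹) volume c]
  exact integral_abs32 hq

lemma integrable32' (hq : 0 < q) (c : ℝ) :
    Integrable fun t : ℝ => ((q + (c - t) ^ 2) ^ ((3:ℝ)/2))⁻¹ :=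
  (integrable32 hq).comp_sub_left c

lemma integral32' (hq : 0 < q) (c : ℝ) :
    ∫ t : ℝ, ((q + (c - t) ^ 2) ^ ((3:ℝ)/2))⁻¹ = 2 * q⁻¹ := by
  rw [integral_sub_left_eq_self (fun s : ℝ => ((q + s ^ 2) ^ ((3:ℝ)/2))⁻¹) volume c]
  exact integral32 hq

lemma lint_one_add_sq : ∫⁻ t : ℝ, ENNReal.ofReal ((1 + t ^ 2)⁻¹) = ENNReal.ofReal π := by
  rw [← ofReal_integral_eq_lintegral_ofReal integrable_inv_one_add_sq
    (Eventually.of_forall fun t => by positivity), integral_univ_inv_one_add_sq]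

lemma integrableOn_g0 :
    IntegrableOn (fun r : ℝ => (Real.sqrt r)⁻¹) (Ioc 0 1) := by
  have h := (intervalIntegral.intervalIntegrable_rpow' (a := 0) (b := 1)
    (r := -(1/2)) (by norm_num)).1
  refine h.congr_fun (fun r hr => ?_) measurableSet_Ioc
  have : (√r)⁻¹ = r ^ (-(1/2) : ℝ) := by
    rw [Real.sqrt_eq_rpow, ← Real.rpow_neg (le_of_lt hr.1)]
  exact this.symm

lemma integral_g0 : ∫ r in Ioc (0:ℝ) 1, (Real.sqrt r)⁻¹ = 2 := by
  have he : ∫ r in Ioc (0:ℝ) 1, (Real.sqrt r)⁻¹ = ∫ r in Ioc (0:ℝ) 1, r ^ (-(1/2) : ℝ) := by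
    apply setIntegral_congr_fun measurableSet_Ioc
    intro r hr
    show (√r)⁻¹ = r ^ (-(1/2) : ℝ)
    rw [Real.sqrt_eq_rpow, ← Real.rpow_neg (le_of_lt hr.1)]
  rw [he, ← intervalIntegral.integral_of_le zero_le_one,
    integral_rpow (Or.inl (by norm_num))]
  rw [Real.zero_rpow (by norm_num)]
  norm_num

lemma integrableOn_Ioi_g1 :
    IntegrableOn (fun r : ℝ => Set.indicator (Iic 1) (fun r => (Real.sqrt r)⁻¹) r)
      (Ioi 0) := by
  rw [IntegrableOn, integrable_indicator_iff measurableSet_Iic, IntegrableOn,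
    Measure.restrict_restrict measurableSet_Iic, inter_comm, Set.Ioi_inter_Iic]
  exact integrableOn_g0

lemma integral_Ioi_g1 :
    ∫ r in Ioi (0:ℝ), Set.indicator (Iic 1) (fun r => (Real.sqrt r)⁻¹) r = 2 := by
  rw [integral_indicator measurableSet_Iic, Measure.restrict_restrict measurableSet_Iic,
    inter_comm, Set.Ioi_inter_Iic]
  exact integral_g0

lemma g1_eq (u : ℝ) (c : ℝ) :
    Set.indicator {v : ℝ | |c - v| ≤ 1} (fun v => (Real.sqrt |c - v|)⁻¹) u
      = (fun w : ℝ => Set.indicator (Iic 1) (fun r => (Real.sqrt r)⁻¹) |w|) (c - u) := by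
  simp only [Set.indicator, mem_setOf_eq, mem_Iic]

lemma integrable_sing (c : ℝ) :
    Integrable fun u : ℝ =>
      Set.indicator {v : ℝ | |c - v| ≤ 1} (fun v => (Real.sqrt |c - v|)⁻¹) u := by
  simp_rw [g1_eq]
  apply Integrable.comp_sub_left
    (f := fun w : ℝ => Set.indicator (Iic 1) (fun r => (Real.sqrt r)⁻¹) |w|) _ c
  exact my_integrable_comp_abs (f := fun r => Set.indicator (Iic 1)
    (fun r => (Real.sqrt r)⁻¹) r)
    (integrableOn_Ioi_g1.congr_fun (fun x hx => by rw [abs_of_pos hx]) measurableSet_Ioi)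

lemma lint_sing (c : ℝ) :
    ∫⁻ u : ℝ, ENNReal.ofReal
        (Set.indicator {v : ℝ | |c - v| ≤ 1} (fun v => (Real.sqrt |c - v|)⁻¹) u)
      = ENNReal.ofReal 4 := by
  rw [← ofReal_integral_eq_lintegral_ofReal (integrable_sing c)
    (Eventually.of_forall fun u => Set.indicator_nonneg (fun v _ => by positivity) u)]
  congr 1
  simp_rw [g1_eq]
  rw [integral_sub_left_eq_self
    (fun w : ℝ => Set.indicator (Iic 1) (fun r => (Real.sqrt r)⁻¹) |w|) volume c,
    integral_comp_abs (f := fun r => Set.indicator (Iic 1) (fun r => (Real.sqrt r)⁻¹) r),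
    integral_Ioi_g1]
  norm_num

lemma bw_sq (y : ℝ × ℝ) : (bw y) ^ 2 = (1 + y.1 ^ 2) * (1 + y.2 ^ 2) := by
  rw [bw, mul_pow, Real.sq_sqrt (by positivity), Real.sq_sqrt (by positivity)]

lemma one_le_bw_sq (y : ℝ × ℝ) : 1 ≤ (bw y) ^ 2 := by
  rw [bw_sq]; nlinarith [sq_nonneg y.1, sq_nonneg y.2]

lemma continuous_bw : Continuous bw :=
  (Real.continuous_sqrt.comp (continuous_const.add (continuous_fst.pow 2))).mul
    (Real.continuous_sqrt.comp (continuous_const.add (continuous_snd.pow 2)))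

def sfun (a : ℝ) : ℝ → ℝ :=
  Set.indicator {v : ℝ | |a - v| ≤ 1} (fun v => (Real.sqrt |a - v|)⁻¹)

lemma sfun_nonneg (a u : ℝ) : 0 ≤ sfun a u :=
  Set.indicator_nonneg (fun v _ => by positivity) u

lemma measurable_sfun (a : ℝ) : Measurable (sfun a) := by
  apply Measurable.indicator
  · exact (Real.continuous_sqrt.comp (continuous_const.sub continuous_id).abs).measurable.inv
  · exact measurableSet_le ((continuous_const.sub continuous_id).abs.measurable) measurable_const

lemma lint_sfun (a : ℝ) : ∫⁻ u : ℝ, ENNReal.ofReal (sfun a u) = ENNReal.ofReal 4 :=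
  lint_sing a

lemma null_line_fst (a : ℝ) : volume {y : ℝ × ℝ | y.1 = a} = 0 := by
  have h : {y : ℝ × ℝ | y.1 = a} = ({a} : Set ℝ) ×ˢ (univ : Set ℝ) := by
    ext y; rw [Set.mem_prod]; simp
  rw [h, Measure.volume_eq_prod, Measure.prod_prod]
  simp

lemma null_line_snd (b : ℝ) : volume {y : ℝ × ℝ | y.2 = b} = 0 := by
  have h : {y : ℝ × ℝ | y.2 = b} = (univ : Set ℝ) ×ˢ ({b} : Set ℝ) := by
    ext y; rw [Set.mem_prod]; simp
  rw [h, Measure.volume_eq_prod, Measure.prod_prod]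
  simp

lemma ae_offdiag (a b : ℝ) : ∀ᵐ y : ℝ × ℝ, y.1 ≠ a ∧ y.2 ≠ b := by
  have hnull : volume ({y : ℝ × ℝ | y.1 = a} ∪ {y : ℝ × ℝ | y.2 = b}) = 0 :=
    measure_union_null (null_line_fst a) (null_line_snd b)
  rw [ae_iff]
  refine measure_mono_null ?_ hnull
  intro y hy
  simp only [mem_setOf_eq, not_and_or, not_not] at hy ⊢
  rcases hy with h | h
  · exact Or.inl h
  · exact Or.inr h

lemma lint_bw : ∫⁻ y : ℝ × ℝ, ENNReal.ofReal (((bw y) ^ 2)⁻¹)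
    = ENNReal.ofReal π * ENNReal.ofReal π := by
  have hb : ∀ y : ℝ × ℝ, ((bw y) ^ 2)⁻¹ = (1 + y.1 ^ 2)⁻¹ * (1 + y.2 ^ 2)⁻¹ := by
    intro y; rw [bw_sq, mul_inv]
  simp_rw [hb]
  rw [Measure.volume_eq_prod, lintegral_prod]
  · have inner : ∀ y1 : ℝ, ∫⁻ y2 : ℝ, ENNReal.ofReal ((1 + y1 ^ 2)⁻¹ * (1 + y2 ^ 2)⁻¹)
        = ENNReal.ofReal ((1 + y1 ^ 2)⁻¹) * ENNReal.ofReal π := by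
      intro y1
      simp_rw [ENNReal.ofReal_mul (by positivity : (0:ℝ) ≤ (1 + y1 ^ 2)⁻¹)]
      rw [lintegral_const_mul' _ _ ENNReal.ofReal_ne_top, lint_one_add_sq]
    simp_rw [inner]
    rw [lintegral_mul_const' _ _ ENNReal.ofReal_ne_top, lint_one_add_sq]
  · apply Measurable.aemeasurable
    apply Measurable.ennreal_ofReal
    exact (((measurable_fst.pow_const 2).const_add 1).inv).mul
      (((measurable_snd.pow_const 2).const_add 1).inv)

lemma lint_sfun2 (a b : ℝ) :
    ∫⁻ y : ℝ × ℝ, ENNReal.ofReal (sfun a y.1 * sfun b y.2)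
      = ENNReal.ofReal 4 * ENNReal.ofReal 4 := by
  rw [Measure.volume_eq_prod, lintegral_prod]
  · have inner : ∀ y1 : ℝ, ∫⁻ y2 : ℝ, ENNReal.ofReal (sfun a y1 * sfun b y2)
        = ENNReal.ofReal (sfun a y1) * ENNReal.ofReal 4 := by
      intro y1
      simp_rw [ENNReal.ofReal_mul (sfun_nonneg a y1)]
      rw [lintegral_const_mul' _ _ ENNReal.ofReal_ne_top, lint_sfun]
    simp_rw [inner]
    rw [lintegral_mul_const' _ _ ENNReal.ofReal_ne_top, lint_sfun]
  · apply Measurable.aemeasurable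
    apply Measurable.ennreal_ofReal
    exact ((measurable_sfun a).comp measurable_fst).mul
      ((measurable_sfun b).comp measurable_snd)

lemma lint_weight (a b : ℝ) :
    ∫⁻ y : ℝ × ℝ, ENNReal.ofReal (((bw y) ^ 2)⁻¹ *
        (Real.sqrt ((a - y.1) ^ 2 + (b - y.2) ^ 2))⁻¹)
      ≤ ENNReal.ofReal 32 := by
  have hpt : ∀ᵐ y : ℝ × ℝ, ENNReal.ofReal (((bw y) ^ 2)⁻¹ *
        (Real.sqrt ((a - y.1) ^ 2 + (b - y.2) ^ 2))⁻¹)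
      ≤ ENNReal.ofReal (((bw y) ^ 2)⁻¹) + ENNReal.ofReal (sfun a y.1 * sfun b y.2) := by
    filter_upwards [ae_offdiag a b] with y hy
    obtain ⟨h1, h2⟩ := hy
    rw [← ENNReal.ofReal_add (by positivity) (mul_nonneg (sfun_nonneg _ _) (sfun_nonneg _ _))]
    apply ENNReal.ofReal_le_ofReal
    set q := (a - y.1) ^ 2 + (b - y.2) ^ 2 with hqdef
    have hbw := one_le_bw_sq y
    have hbwpos : (0:ℝ) < (bw y) ^ 2 := lt_of_lt_of_le one_pos hbw
    have ha1 : (0:ℝ) < |a - y.1| := abs_pos.2 (fun h => h1 (by linarith [sub_eq_zero.1 h]))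
    have hb1 : (0:ℝ) < |b - y.2| := abs_pos.2 (fun h => h2 (by linarith [sub_eq_zero.1 h]))
    have hqpos : 0 < q := by
      have := sq_abs (a - y.1); have := sq_abs (b - y.2)
      nlinarith [sq_nonneg (b - y.2), sq_nonneg (a - y.1)]
    by_cases hq1 : q ≤ 1
    · -- near the singularity
      have hmem1 : |a - y.1| ≤ 1 := by
        rw [← Real.sqrt_one, ← Real.sqrt_sq_eq_abs]
        apply Real.sqrt_le_sqrt; nlinarith [sq_nonneg (b - y.2)]
      have hmem2 : |b - y.2| ≤ 1 := by
        rw [← Real.sqrt_one, ← Real.sqrt_sq_eq_abs]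
        apply Real.sqrt_le_sqrt; nlinarith [sq_nonneg (a - y.1)]
      have hs1 : sfun a y.1 = (Real.sqrt |a - y.1|)⁻¹ :=
        Set.indicator_of_mem (by simpa using hmem1) _
      have hs2 : sfun b y.2 = (Real.sqrt |b - y.2|)⁻¹ :=
        Set.indicator_of_mem (by simpa using hmem2) _
      have hql : |a - y.1| * |b - y.2| ≤ q := by
        nlinarith [sq_abs (a - y.1), sq_abs (b - y.2), sq_nonneg (|a - y.1| - |b - y.2|)]
      have hsq : Real.sqrt (|a - y.1| * |b - y.2|) ≤ Real.sqrt q := Real.sqrt_le_sqrt hql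
      have hsqpos : 0 < Real.sqrt (|a - y.1| * |b - y.2|) :=
        Real.sqrt_pos.2 (mul_pos ha1 hb1)
      have hinv : (Real.sqrt q)⁻¹ ≤ (Real.sqrt (|a - y.1| * |b - y.2|))⁻¹ :=
        inv_anti₀ hsqpos hsq
      have hbwinv : ((bw y) ^ 2)⁻¹ ≤ 1 := by
        rw [inv_le_one_iff₀]; right; exact hbw
      calc ((bw y) ^ 2)⁻¹ * (Real.sqrt q)⁻¹
          ≤ 1 * (Real.sqrt (|a - y.1| * |b - y.2|))⁻¹ := by
            apply mul_le_mul hbwinv hinv (by positivity) one_pos.le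
        _ = sfun a y.1 * sfun b y.2 := by
            rw [one_mul, hs1, hs2, Real.sqrt_mul (abs_nonneg _), mul_inv]
        _ ≤ ((bw y) ^ 2)⁻¹ + sfun a y.1 * sfun b y.2 := le_add_of_nonneg_left (by positivity)
    · -- away from the singularity
      push_neg at hq1
      have h1q : (1:ℝ) ≤ Real.sqrt q := by
        rw [← Real.sqrt_one]; exact Real.sqrt_le_sqrt hq1.le
      have : (Real.sqrt q)⁻¹ ≤ 1 := by
        rw [inv_le_one_iff₀]; right; exact h1q
      calc ((bw y) ^ 2)⁻¹ * (Real.sqrt q)⁻¹ ≤ ((bw y) ^ 2)⁻¹ * 1 :=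
            mul_le_mul_of_nonneg_left this (by positivity)
        _ = ((bw y) ^ 2)⁻¹ := mul_one _
        _ ≤ _ := le_add_of_nonneg_right (mul_nonneg (sfun_nonneg _ _) (sfun_nonneg _ _))
  calc ∫⁻ y : ℝ × ℝ, ENNReal.ofReal (((bw y) ^ 2)⁻¹ *
        (Real.sqrt ((a - y.1) ^ 2 + (b - y.2) ^ 2))⁻¹)
      ≤ ∫⁻ y : ℝ × ℝ, (ENNReal.ofReal (((bw y) ^ 2)⁻¹)
          + ENNReal.ofReal (sfun a y.1 * sfun b y.2)) := lintegral_mono_ae hpt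
    _ = (ENNReal.ofReal π * ENNReal.ofReal π) + ENNReal.ofReal 4 * ENNReal.ofReal 4 := by
        rw [lintegral_add_left, lint_bw, lint_sfun2]
        apply Measurable.ennreal_ofReal
        exact ((continuous_bw.pow 2).measurable).inv
    _ ≤ ENNReal.ofReal 32 := by
        rw [← ENNReal.ofReal_mul Real.pi_pos.le, ← ENNReal.ofReal_mul (by norm_num),
          ← ENNReal.ofReal_add (by positivity) (by norm_num)]
        apply ENNReal.ofReal_le_ofReal
        nlinarith [Real.pi_le_four, Real.pi_pos]

lemma lint_maj1 (a b c M : ℝ) (hM : 0 ≤ M) :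
    ∫⁻ y : (ℝ × ℝ) × ℝ, ENNReal.ofReal (M * ((bw y.1) ^ 2)⁻¹ *
        ((a - y.1.1) ^ 2 + (b - y.1.2) ^ 2 + (c - y.2) ^ 2)⁻¹)
      ≤ ENNReal.ofReal (M * π * 32) := by
  have hmeas : Measurable fun y : (ℝ × ℝ) × ℝ => ENNReal.ofReal (M * ((bw y.1) ^ 2)⁻¹ *
      ((a - y.1.1) ^ 2 + (b - y.1.2) ^ 2 + (c - y.2) ^ 2)⁻¹) := by
    apply Measurable.ennreal_ofReal
    apply Measurable.mul
    · exact (measurable_const.mul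
        (((continuous_bw.comp continuous_fst).pow 2).measurable.inv))
    · apply Measurable.inv
      fun_prop
  rw [Measure.volume_eq_prod, lintegral_prod _ hmeas.aemeasurable]
  have hae : (fun w : ℝ × ℝ => ∫⁻ t : ℝ, ENNReal.ofReal (M * ((bw w) ^ 2)⁻¹ *
        ((a - w.1) ^ 2 + (b - w.2) ^ 2 + (c - t) ^ 2)⁻¹))
      =ᵐ[volume] fun w => ENNReal.ofReal (M * π) *
        ENNReal.ofReal (((bw w) ^ 2)⁻¹ *
          (Real.sqrt ((a - w.1) ^ 2 + (b - w.2) ^ 2))⁻¹) := by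
    filter_upwards [ae_offdiag a b] with w hw
    have hq : 0 < (a - w.1) ^ 2 + (b - w.2) ^ 2 := by
      rcases hw with ⟨h1, _⟩
      have : a - w.1 ≠ 0 := fun h => h1 (by linarith [sub_eq_zero.1 h])
      positivity
    have hB : (0:ℝ) ≤ M * ((bw w) ^ 2)⁻¹ := by
      have := one_le_bw_sq w; positivity
    simp_rw [ENNReal.ofReal_mul hB]
    rw [lintegral_const_mul' _ _ ENNReal.ofReal_ne_top, key_lint1 hq c,
      ← ENNReal.ofReal_mul hB, ← ENNReal.ofReal_mul (by positivity : (0:ℝ) ≤ M * π)]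
    congr 1
    ring
  rw [lintegral_congr_ae hae, lintegral_const_mul' _ _ ENNReal.ofReal_ne_top]
  calc ENNReal.ofReal (M * π) * ∫⁻ w : ℝ × ℝ, ENNReal.ofReal (((bw w) ^ 2)⁻¹ *
        (Real.sqrt ((a - w.1) ^ 2 + (b - w.2) ^ 2))⁻¹)
      ≤ ENNReal.ofReal (M * π) * ENNReal.ofReal 32 :=
        mul_le_mul_right (lint_weight a b) _
    _ = ENNReal.ofReal (M * π * 32) := by
        rw [← ENNReal.ofReal_mul (by positivity)]

lemma lint_maj2 (a b c M : ℝ) (hM : 0 ≤ M) :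
    ∫⁻ y : (ℝ × ℝ) × ℝ, ENNReal.ofReal (M * (((bw y.1) ^ 2)⁻¹ *
        (|c - y.2| * Real.sqrt ((a - y.1.1) ^ 2 + (b - y.1.2) ^ 2) *
          (((a - y.1.1) ^ 2 + (b - y.1.2) ^ 2 + (c - y.2) ^ 2) ^ ((3:ℝ)/2))⁻¹)))
      ≤ ENNReal.ofReal (M * 2 * (π * π)) := by
  have hmeas : Measurable fun y : (ℝ × ℝ) × ℝ => ENNReal.ofReal (M * (((bw y.1) ^ 2)⁻¹ *
      (|c - y.2| * Real.sqrt ((a - y.1.1) ^ 2 + (b - y.1.2) ^ 2) *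
        (((a - y.1.1) ^ 2 + (b - y.1.2) ^ 2 + (c - y.2) ^ 2) ^ ((3:ℝ)/2))⁻¹))) := by
    apply Measurable.ennreal_ofReal
    apply Measurable.const_mul
    apply Measurable.mul
    · exact ((continuous_bw.comp continuous_fst).pow 2).measurable.inv
    · apply Measurable.mul
      · apply Measurable.mul
        · fun_prop
        · exact (Real.continuous_sqrt.comp (by fun_prop)).measurable
      · apply Measurable.inv
        exact (Continuous.rpow_const (by fun_prop)
          (fun x => Or.inr (by norm_num))).measurable
  rw [Measure.volume_eq_prod, lintegral_prod _ hmeas.aemeasurable]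
  have hae : (fun w : ℝ × ℝ => ∫⁻ t : ℝ, ENNReal.ofReal (M * (((bw w) ^ 2)⁻¹ *
        (|c - t| * Real.sqrt ((a - w.1) ^ 2 + (b - w.2) ^ 2) *
          (((a - w.1) ^ 2 + (b - w.2) ^ 2 + (c - t) ^ 2) ^ ((3:ℝ)/2))⁻¹))))
      =ᵐ[volume] fun w => ENNReal.ofReal (M * 2) *
        ENNReal.ofReal (((bw w) ^ 2)⁻¹) := by
    filter_upwards [ae_offdiag a b] with w hw
    set q := (a - w.1) ^ 2 + (b - w.2) ^ 2 with hqdef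
    have hq : 0 < q := by
      rcases hw with ⟨h1, _⟩
      have : a - w.1 ≠ 0 := fun h => h1 (by linarith [sub_eq_zero.1 h])
      positivity
    have hB : (0:ℝ) ≤ M * (((bw w) ^ 2)⁻¹ * Real.sqrt q) := by
      have := one_le_bw_sq w; positivity
    have hrearr : ∀ t : ℝ, M * (((bw w) ^ 2)⁻¹ *
        (|c - t| * Real.sqrt q * ((q + (c - t) ^ 2) ^ ((3:ℝ)/2))⁻¹))
        = (M * (((bw w) ^ 2)⁻¹ * Real.sqrt q)) *
          (|c - t| * ((q + (c - t) ^ 2) ^ ((3:ℝ)/2))⁻¹) := fun t => by ring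
    simp_rw [hrearr, ENNReal.ofReal_mul hB]
    rw [lintegral_const_mul' _ _ ENNReal.ofReal_ne_top, key_lint2 hq c,
      ← ENNReal.ofReal_mul hB]
    have hsqrtq : Real.sqrt q ≠ 0 := by positivity
    rw [← ENNReal.ofReal_mul (by positivity : (0:ℝ) ≤ M * 2)]
    congr 1
    calc M * (((bw w) ^ 2)⁻¹ * Real.sqrt q) * (2 * (Real.sqrt q)⁻¹)
        = (M * 2 * ((bw w) ^ 2)⁻¹) * (Real.sqrt q * (Real.sqrt q)⁻¹) := by ring
      _ = M * 2 * ((bw w) ^ 2)⁻¹ := by rw [mul_inv_cancel₀ hsqrtq, mul_one]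
  rw [lintegral_congr_ae hae, lintegral_const_mul' _ _ ENNReal.ofReal_ne_top, lint_bw]
  rw [← ENNReal.ofReal_mul Real.pi_pos.le,
    ← ENNReal.ofReal_mul (by positivity : (0:ℝ) ≤ M * 2)]

lemma sqrt_mul_inv32 {S : ℝ} (hS : 0 < S) :
    Real.sqrt S * (S ^ ((3:ℝ)/2))⁻¹ = S⁻¹ := by
  rw [Real.sqrt_eq_rpow, ← Real.rpow_neg hS.le, ← Real.rpow_add hS,
    show (1:ℝ)/2 + -((3:ℝ)/2) = -1 by norm_num, Real.rpow_neg_one]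

lemma pointwise_bound1 {a b c c0 : ℝ} (r : ℝ) (w : ℝ × ℝ) (t : ℝ)
    (hr : |r| ≤ c0) (hc0 : 0 ≤ c0) :
    ‖(r / d3 ((a, b), c) (w, t)) • ((w.2 - b, a - w.1) : ℝ × ℝ)‖
      ≤ c0 * ((a - w.1) ^ 2 + (b - w.2) ^ 2 + (c - t) ^ 2)⁻¹ := by
  have hd3 : d3 ((a, b), c) (w, t)
      = ((a - w.1) ^ 2 + (b - w.2) ^ 2 + (c - t) ^ 2) ^ ((3:ℝ)/2) := rfl
  by_cases hq : (a - w.1) ^ 2 + (b - w.2) ^ 2 = 0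
  · have h1 : a - w.1 = 0 := by nlinarith [sq_nonneg (a - w.1), sq_nonneg (b - w.2)]
    have h2 : b - w.2 = 0 := by nlinarith [sq_nonneg (a - w.1), sq_nonneg (b - w.2)]
    have hv : ((w.2 - b, a - w.1) : ℝ × ℝ) = 0 := by
      rw [Prod.mk_eq_zero]; constructor <;> linarith
    rw [hv, smul_zero, norm_zero]
    positivity
  · have hq' : 0 < (a - w.1) ^ 2 + (b - w.2) ^ 2 :=
      lt_of_le_of_ne (by positivity) (Ne.symm hq)
    have hS : 0 < (a - w.1) ^ 2 + (b - w.2) ^ 2 + (c - t) ^ 2 :=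
      add_pos_of_pos_of_nonneg hq' (sq_nonneg _)
    have hd3pos : 0 < d3 ((a, b), c) (w, t) := by
      rw [hd3]; exact Real.rpow_pos_of_pos hS _
    have hnv : ‖((w.2 - b, a - w.1) : ℝ × ℝ)‖
        ≤ Real.sqrt ((a - w.1) ^ 2 + (b - w.2) ^ 2 + (c - t) ^ 2) := by
      rw [Prod.norm_def]
      simp only [Prod.fst, Prod.snd]
      apply max_le
      · rw [Real.norm_eq_abs, ← Real.sqrt_sq_eq_abs]
        exact Real.sqrt_le_sqrt (by nlinarith [sq_nonneg (a - w.1), sq_nonneg (c - t)])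
      · rw [Real.norm_eq_abs, ← Real.sqrt_sq_eq_abs]
        exact Real.sqrt_le_sqrt (by nlinarith [sq_nonneg (b - w.2), sq_nonneg (c - t)])
    rw [norm_smul, Real.norm_eq_abs, abs_div, abs_of_pos hd3pos]
    calc |r| / d3 ((a, b), c) (w, t) * ‖((w.2 - b, a - w.1) : ℝ × ℝ)‖
        ≤ c0 / d3 ((a, b), c) (w, t) *
          Real.sqrt ((a - w.1) ^ 2 + (b - w.2) ^ 2 + (c - t) ^ 2) := by
          gcongr
      _ = c0 * (Real.sqrt ((a - w.1) ^ 2 + (b - w.2) ^ 2 + (c - t) ^ 2) *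
            ((((a - w.1) ^ 2 + (b - w.2) ^ 2 + (c - t) ^ 2) ^ ((3:ℝ)/2))⁻¹)) := by
          rw [hd3]; ring
      _ = c0 * ((a - w.1) ^ 2 + (b - w.2) ^ 2 + (c - t) ^ 2)⁻¹ := by
          rw [sqrt_mul_inv32 hS]

lemma pointwise_bound2 {a b c c0 : ℝ} (r1 r2 : ℝ) (w : ℝ × ℝ) (t : ℝ)
    (hr : |r1 - r2| ≤ c0 * |c - t|) (hc0 : 0 ≤ c0) :
    ‖(r1 / d3 ((a, b), c) (w, t)) • ((w.2 - b, a - w.1) : ℝ × ℝ)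
      - (r2 / d3 ((a, b), c) (w, t)) • ((w.2 - b, a - w.1) : ℝ × ℝ)‖
    ≤ c0 * (|c - t| * Real.sqrt ((a - w.1) ^ 2 + (b - w.2) ^ 2) *
        ((((a - w.1) ^ 2 + (b - w.2) ^ 2 + (c - t) ^ 2) ^ ((3:ℝ)/2))⁻¹)) := by
  rw [← sub_smul, div_sub_div_same]
  have hd3 : d3 ((a, b), c) (w, t)
      = ((a - w.1) ^ 2 + (b - w.2) ^ 2 + (c - t) ^ 2) ^ ((3:ℝ)/2) := rfl
  by_cases hq : (a - w.1) ^ 2 + (b - w.2) ^ 2 = 0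
  · have h1 : a - w.1 = 0 := by nlinarith [sq_nonneg (a - w.1), sq_nonneg (b - w.2)]
    have h2 : b - w.2 = 0 := by nlinarith [sq_nonneg (a - w.1), sq_nonneg (b - w.2)]
    have hv : ((w.2 - b, a - w.1) : ℝ × ℝ) = 0 := by
      rw [Prod.mk_eq_zero]; constructor <;> linarith
    rw [hv, smul_zero, norm_zero]
    positivity
  · have hq' : 0 < (a - w.1) ^ 2 + (b - w.2) ^ 2 :=
      lt_of_le_of_ne (by positivity) (Ne.symm hq)
    have hS : 0 < (a - w.1) ^ 2 + (b - w.2) ^ 2 + (c - t) ^ 2 :=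
      add_pos_of_pos_of_nonneg hq' (sq_nonneg _)
    have hd3pos : 0 < d3 ((a, b), c) (w, t) := by
      rw [hd3]; exact Real.rpow_pos_of_pos hS _
    have hnv : ‖((w.2 - b, a - w.1) : ℝ × ℝ)‖
        ≤ Real.sqrt ((a - w.1) ^ 2 + (b - w.2) ^ 2) := by
      rw [Prod.norm_def]
      simp only [Prod.fst, Prod.snd]
      apply max_le
      · rw [Real.norm_eq_abs, ← Real.sqrt_sq_eq_abs]
        exact Real.sqrt_le_sqrt (by nlinarith [sq_nonneg (a - w.1)])
      · rw [Real.norm_eq_abs, ← Real.sqrt_sq_eq_abs]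
        exact Real.sqrt_le_sqrt (by nlinarith [sq_nonneg (b - w.2)])
    rw [norm_smul, Real.norm_eq_abs, abs_div, abs_of_pos hd3pos]
    calc |r1 - r2| / d3 ((a, b), c) (w, t) * ‖((w.2 - b, a - w.1) : ℝ × ℝ)‖
        ≤ (c0 * |c - t|) / d3 ((a, b), c) (w, t) *
            Real.sqrt ((a - w.1) ^ 2 + (b - w.2) ^ 2) := by
          gcongr
      _ = c0 * (|c - t| * Real.sqrt ((a - w.1) ^ 2 + (b - w.2) ^ 2) *
            ((((a - w.1) ^ 2 + (b - w.2) ^ 2 + (c - t) ^ 2) ^ ((3:ℝ)/2))⁻¹)) := by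
          rw [hd3]; ring

/-- The three-dimensional Biot–Savart velocity of a vertically modulated vortex
`Ω(x_⊥, ψ(x₃)) e₃` is uniformly close to the sliced two-dimensional velocity, with an
error controlled by `sup |ψ'|`, and is itself uniformly bounded. -/
theorem modulated_vortex_velocity_comparison :
    ∃ C > 0, ∀ (R M : ℝ), 0 < R → 0 < M →
      ∀ (Ω D : ℝ × ℝ → ℝ → ℝ) (ψ : ℝ → ℝ),
        Continuous (fun p : (ℝ × ℝ) × ℝ => Ω p.1 p.2) →
        (∀ y : ℝ × ℝ, ∀ ρ ∈ Set.Icc (-R) R,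
          HasDerivWithinAt (Ω y) (D y ρ) (Set.Icc (-R) R) ρ) →
        ContinuousOn (fun p : (ℝ × ℝ) × ℝ => D p.1 p.2)
          (Set.univ ×ˢ Set.Icc (-R) R) →
        (∀ y : ℝ × ℝ, ∀ ρ ∈ Set.Icc (-R) R,
          bw y ^ 2 * (|Ω y ρ| + |D y ρ|) ≤ M) →
        (∀ z : ℝ, ψ z ∈ Set.Icc (-R) R) →
        Differentiable ℝ ψ → Continuous (deriv ψ) →
        (∃ K : ℝ, ∀ z : ℝ, |deriv ψ z| ≤ K) →
        ∀ x : P3,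
          ‖Ut Ω ψ x - Uslice Ω ψ x‖ ≤ C * M * (⨆ z : ℝ, |deriv ψ z|) ∧
          ‖Ut Ω ψ x‖ ≤ C * M := by
  refine ⟨100, by norm_num, ?_⟩
  intro R M hR hM Ω D ψ hΩc hΩd hDc hMb hψmem hψdiff hψdc hKbd x
  obtain ⟨⟨a, b⟩, c⟩ := x
  obtain ⟨K₀, hK₀⟩ := hKbd
  set K := ⨆ z : ℝ, |deriv ψ z| with hKdef
  have hbdd : BddAbove (Set.range fun z : ℝ => |deriv ψ z|) :=
    ⟨K₀, by rintro _ ⟨z, rfl⟩; exact hK₀ z⟩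
  have hKz : ∀ z, |deriv ψ z| ≤ K := fun z => le_ciSup hbdd z
  have hK0 : 0 ≤ K := le_trans (abs_nonneg _) (hKz 0)
  have hbw2 : ∀ w : ℝ × ℝ, (0:ℝ) < bw w ^ 2 :=
    fun w => lt_of_lt_of_le one_pos (one_le_bw_sq w)
  have hΩb : ∀ w ρ, ρ ∈ Icc (-R) R → |Ω w ρ| ≤ M * (bw w ^ 2)⁻¹ := by
    intro w ρ hρ
    have h : |Ω w ρ| ≤ M / bw w ^ 2 := by
      rw [le_div_iff₀ (hbw2 w)]
      nlinarith [hMb w ρ hρ, abs_nonneg (D w ρ), hbw2 w, abs_nonneg (Ω w ρ)]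
    rwa [div_eq_mul_inv] at h
  have hDb : ∀ w ρ, ρ ∈ Icc (-R) R → |D w ρ| ≤ M * (bw w ^ 2)⁻¹ := by
    intro w ρ hρ
    have h : |D w ρ| ≤ M / bw w ^ 2 := by
      rw [le_div_iff₀ (hbw2 w)]
      nlinarith [hMb w ρ hρ, abs_nonneg (D w ρ), hbw2 w, abs_nonneg (Ω w ρ)]
    rwa [div_eq_mul_inv] at h
  have hMbw : ∀ w : ℝ × ℝ, (0:ℝ) ≤ M * (bw w ^ 2)⁻¹ :=
    fun w => mul_nonneg hM.le (inv_nonneg.2 (sq_nonneg _))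
  have hLip : ∀ (w : ℝ × ℝ) (t : ℝ),
      |Ω w (ψ t) - Ω w (ψ c)| ≤ (M * (bw w ^ 2)⁻¹ * K) * |c - t| := by
    intro w t
    have h1 : ‖Ω w (ψ t) - Ω w (ψ c)‖ ≤ (M * (bw w ^ 2)⁻¹) * ‖ψ t - ψ c‖ :=
      (convex_Icc (-R) R).norm_image_sub_le_of_norm_hasDerivWithin_le
        (fun ρ hρ => hΩd w ρ hρ)
        (fun ρ hρ => by rw [Real.norm_eq_abs]; exact hDb w ρ hρ)
        (hψmem c) (hψmem t)
    have h2 : ‖ψ t - ψ c‖ ≤ K * ‖t - c‖ :=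
      convex_univ.norm_image_sub_le_of_norm_hasDerivWithin_le
        (fun z _ => (hψdiff z).hasDerivAt.hasDerivWithinAt)
        (fun z _ => by rw [Real.norm_eq_abs]; exact hKz z) trivial trivial
    rw [Real.norm_eq_abs] at h1 h2
    rw [Real.norm_eq_abs] at h1 h2
    calc |Ω w (ψ t) - Ω w (ψ c)| ≤ (M * (bw w ^ 2)⁻¹) * |ψ t - ψ c| := h1
      _ ≤ (M * (bw w ^ 2)⁻¹) * (K * |t - c|) :=
          mul_le_mul_of_nonneg_left h2 (hMbw w)
      _ = (M * (bw w ^ 2)⁻¹ * K) * |c - t| := by rw [abs_sub_comm]; ring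
  -- measurability
  have hcd3 : Continuous fun y : (ℝ × ℝ) × ℝ => d3 ((a, b), c) y := by
    simp only [d3]
    exact Continuous.rpow_const (by fun_prop) (fun _ => Or.inr (by norm_num))
  have hcv : Continuous fun y : (ℝ × ℝ) × ℝ => ((y.1.2 - b, a - y.1.1) : ℝ × ℝ) := by
    fun_prop
  have hcΩψ : Continuous fun y : (ℝ × ℝ) × ℝ => Ω y.1 (ψ y.2) :=
    hΩc.comp (continuous_fst.prodMk (hψdiff.continuous.comp continuous_snd))
  have hcΩc : Continuous fun y : (ℝ × ℝ) × ℝ => Ω y.1 (ψ c) :=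
    hΩc.comp (continuous_fst.prodMk continuous_const)
  have hmf : Measurable fun y : (ℝ × ℝ) × ℝ =>
      (Ω y.1 (ψ y.2) / d3 ((a, b), c) y) • ((y.1.2 - b, a - y.1.1) : ℝ × ℝ) :=
    (hcΩψ.measurable.div hcd3.measurable).smul hcv.measurable
  have hmg : Measurable fun y : (ℝ × ℝ) × ℝ =>
      (Ω y.1 (ψ c) / d3 ((a, b), c) y) • ((y.1.2 - b, a - y.1.1) : ℝ × ℝ) :=
    (hcΩc.measurable.div hcd3.measurable).smul hcv.measurable
  -- pointwise bounds
  have hpt1 : ∀ y : (ℝ × ℝ) × ℝ,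
      ‖(Ω y.1 (ψ y.2) / d3 ((a, b), c) y) • ((y.1.2 - b, a - y.1.1) : ℝ × ℝ)‖
        ≤ M * (bw y.1 ^ 2)⁻¹ *
          ((a - y.1.1) ^ 2 + (b - y.1.2) ^ 2 + (c - y.2) ^ 2)⁻¹ :=
    fun y => pointwise_bound1 (Ω y.1 (ψ y.2)) y.1 y.2
      (hΩb y.1 (ψ y.2) (hψmem y.2)) (hMbw y.1)
  have hpt1g : ∀ y : (ℝ × ℝ) × ℝ,
      ‖(Ω y.1 (ψ c) / d3 ((a, b), c) y) • ((y.1.2 - b, a - y.1.1) : ℝ × ℝ)‖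
        ≤ M * (bw y.1 ^ 2)⁻¹ *
          ((a - y.1.1) ^ 2 + (b - y.1.2) ^ 2 + (c - y.2) ^ 2)⁻¹ :=
    fun y => pointwise_bound1 (Ω y.1 (ψ c)) y.1 y.2
      (hΩb y.1 (ψ c) (hψmem c)) (hMbw y.1)
  have hpt2 : ∀ y : (ℝ × ℝ) × ℝ,
      ‖(Ω y.1 (ψ y.2) / d3 ((a, b), c) y) • ((y.1.2 - b, a - y.1.1) : ℝ × ℝ)
        - (Ω y.1 (ψ c) / d3 ((a, b), c) y) • ((y.1.2 - b, a - y.1.1) : ℝ × ℝ)‖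
        ≤ M * K * ((bw y.1 ^ 2)⁻¹ *
          (|c - y.2| * Real.sqrt ((a - y.1.1) ^ 2 + (b - y.1.2) ^ 2) *
            (((a - y.1.1) ^ 2 + (b - y.1.2) ^ 2 + (c - y.2) ^ 2) ^ ((3:ℝ)/2))⁻¹)) := by
    intro y
    refine le_trans (pointwise_bound2 (Ω y.1 (ψ y.2)) (Ω y.1 (ψ c)) y.1 y.2
      (hLip y.1 y.2) ?_) (le_of_eq (by ring))
    exact mul_nonneg (hMbw y.1) hK0
  -- lintegral bounds
  have hfin1 : ∫⁻ y : (ℝ × ℝ) × ℝ, ENNReal.ofReal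
      ‖(Ω y.1 (ψ y.2) / d3 ((a, b), c) y) • ((y.1.2 - b, a - y.1.1) : ℝ × ℝ)‖
      ≤ ENNReal.ofReal (M * π * 32) :=
    le_trans (lintegral_mono fun y => ENNReal.ofReal_le_ofReal (hpt1 y))
      (lint_maj1 a b c M hM.le)
  have hfin1g : ∫⁻ y : (ℝ × ℝ) × ℝ, ENNReal.ofReal
      ‖(Ω y.1 (ψ c) / d3 ((a, b), c) y) • ((y.1.2 - b, a - y.1.1) : ℝ × ℝ)‖
      ≤ ENNReal.ofReal (M * π * 32) :=
    le_trans (lintegral_mono fun y => ENNReal.ofReal_le_ofReal (hpt1g y))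
      (lint_maj1 a b c M hM.le)
  have hfin2 : ∫⁻ y : (ℝ × ℝ) × ℝ, ENNReal.ofReal
      ‖(Ω y.1 (ψ y.2) / d3 ((a, b), c) y) • ((y.1.2 - b, a - y.1.1) : ℝ × ℝ)
        - (Ω y.1 (ψ c) / d3 ((a, b), c) y) • ((y.1.2 - b, a - y.1.1) : ℝ × ℝ)‖
      ≤ ENNReal.ofReal (M * K * 2 * (π * π)) :=
    le_trans (lintegral_mono fun y => ENNReal.ofReal_le_ofReal (hpt2 y))
      (lint_maj2 a b c (M * K) (mul_nonneg hM.le hK0))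
  -- integrability
  have hintf : Integrable fun y : (ℝ × ℝ) × ℝ =>
      (Ω y.1 (ψ y.2) / d3 ((a, b), c) y) • ((y.1.2 - b, a - y.1.1) : ℝ × ℝ) := by
    refine ⟨hmf.aestronglyMeasurable, ?_⟩
    rw [hasFiniteIntegral_iff_norm]
    exact lt_of_le_of_lt hfin1 ENNReal.ofReal_lt_top
  have hintg : Integrable fun y : (ℝ × ℝ) × ℝ =>
      (Ω y.1 (ψ c) / d3 ((a, b), c) y) • ((y.1.2 - b, a - y.1.1) : ℝ × ℝ) := by
    refine ⟨hmg.aestronglyMeasurable, ?_⟩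
    rw [hasFiniteIntegral_iff_norm]
    exact lt_of_le_of_lt hfin1g ENNReal.ofReal_lt_top
  -- identification of Ut
  have hUt : Ut Ω ψ ((a, b), c) = (4 * π)⁻¹ • ∫ y : (ℝ × ℝ) × ℝ,
      (Ω y.1 (ψ y.2) / d3 ((a, b), c) y) • ((y.1.2 - b, a - y.1.1) : ℝ × ℝ) := rfl
  -- identification of Uslice via Fubini
  have hg_inner : ∀ w : ℝ × ℝ,
      (∫ t : ℝ, (Ω w (ψ c) / d3 ((a, b), c) (w, t)) • ((w.2 - b, a - w.1) : ℝ × ℝ))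
      = (2:ℝ) • ((Ω w (ψ c) / ((a - w.1) ^ 2 + (b - w.2) ^ 2)) •
          ((w.2 - b, a - w.1) : ℝ × ℝ)) := by
    intro w
    by_cases hq : (a - w.1) ^ 2 + (b - w.2) ^ 2 = 0
    · have h1 : a - w.1 = 0 := by nlinarith [sq_nonneg (a - w.1), sq_nonneg (b - w.2)]
      have h2 : b - w.2 = 0 := by nlinarith [sq_nonneg (a - w.1), sq_nonneg (b - w.2)]
      have hv : ((w.2 - b, a - w.1) : ℝ × ℝ) = 0 := by
        rw [Prod.mk_eq_zero]; constructor <;> linarith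
      simp [hv]
    · have hq' : 0 < (a - w.1) ^ 2 + (b - w.2) ^ 2 :=
        lt_of_le_of_ne (by positivity) (Ne.symm hq)
      have hstep : ∀ t : ℝ, (Ω w (ψ c) / d3 ((a, b), c) (w, t)) •
            ((w.2 - b, a - w.1) : ℝ × ℝ)
          = (Ω w (ψ c) *
              (((a - w.1) ^ 2 + (b - w.2) ^ 2 + (c - t) ^ 2) ^ ((3:ℝ)/2))⁻¹) •
            ((w.2 - b, a - w.1) : ℝ × ℝ) := by
        intro t
        rw [show d3 ((a, b), c) (w, t)
          = ((a - w.1) ^ 2 + (b - w.2) ^ 2 + (c - t) ^ 2) ^ ((3:ℝ)/2) from rfl,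
          div_eq_mul_inv]
      simp_rw [hstep]
      rw [integral_smul_const, integral_const_mul, integral32' hq' c, smul_smul]
      congr 1
      rw [div_eq_mul_inv]
      ring
  have hUs : Uslice Ω ψ ((a, b), c) = (4 * π)⁻¹ • ∫ y : (ℝ × ℝ) × ℝ,
      (Ω y.1 (ψ c) / d3 ((a, b), c) y) • ((y.1.2 - b, a - y.1.1) : ℝ × ℝ) := by
    have hrfl : Uslice Ω ψ ((a, b), c) = (2 * π)⁻¹ •
        ∫ w : ℝ × ℝ, (Ω w (ψ c) / ((a - w.1) ^ 2 + (b - w.2) ^ 2)) •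
          ((w.2 - b, a - w.1) : ℝ × ℝ) := rfl
    have hprod : (∫ y : (ℝ × ℝ) × ℝ,
        (Ω y.1 (ψ c) / d3 ((a, b), c) y) • ((y.1.2 - b, a - y.1.1) : ℝ × ℝ))
        = ∫ w : ℝ × ℝ, ∫ t : ℝ,
            (Ω w (ψ c) / d3 ((a, b), c) (w, t)) • ((w.2 - b, a - w.1) : ℝ × ℝ) :=
      MeasureTheory.integral_prod _ hintg
    rw [hrfl, hprod]
    simp_rw [hg_inner]
    rw [integral_smul, smul_smul]
    congr 1
    have hπ : π ≠ 0 := Real.pi_ne_zero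
    field_simp
    ring
  constructor
  · -- the difference bound
    have hsub : Ut Ω ψ ((a, b), c) - Uslice Ω ψ ((a, b), c)
        = (4 * π)⁻¹ • ∫ y : (ℝ × ℝ) × ℝ,
          ((Ω y.1 (ψ y.2) / d3 ((a, b), c) y) • ((y.1.2 - b, a - y.1.1) : ℝ × ℝ)
            - (Ω y.1 (ψ c) / d3 ((a, b), c) y) • ((y.1.2 - b, a - y.1.1) : ℝ × ℝ)) := by
      rw [hUt, hUs, ← smul_sub, integral_sub hintf hintg]
    rw [hsub, norm_smul, Real.norm_eq_abs,
      abs_of_pos (by positivity : (0:ℝ) < (4 * π)⁻¹)]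
    have hn := MeasureTheory.norm_integral_le_lintegral_norm (μ := volume)
      (fun y : (ℝ × ℝ) × ℝ =>
        (Ω y.1 (ψ y.2) / d3 ((a, b), c) y) • ((y.1.2 - b, a - y.1.1) : ℝ × ℝ)
          - (Ω y.1 (ψ c) / d3 ((a, b), c) y) • ((y.1.2 - b, a - y.1.1) : ℝ × ℝ))
    have hval : ‖∫ y : (ℝ × ℝ) × ℝ,
        ((Ω y.1 (ψ y.2) / d3 ((a, b), c) y) • ((y.1.2 - b, a - y.1.1) : ℝ × ℝ)
          - (Ω y.1 (ψ c) / d3 ((a, b), c) y) • ((y.1.2 - b, a - y.1.1) : ℝ × ℝ))‖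
        ≤ M * K * 2 * (π * π) := by
      refine le_trans hn (ENNReal.toReal_le_of_le_ofReal (by positivity) ?_)
      exact hfin2
    calc (4 * π)⁻¹ * ‖∫ y : (ℝ × ℝ) × ℝ,
        ((Ω y.1 (ψ y.2) / d3 ((a, b), c) y) • ((y.1.2 - b, a - y.1.1) : ℝ × ℝ)
          - (Ω y.1 (ψ c) / d3 ((a, b), c) y) • ((y.1.2 - b, a - y.1.1) : ℝ × ℝ))‖
        ≤ (4 * π)⁻¹ * (M * K * 2 * (π * π)) :=
          mul_le_mul_of_nonneg_left hval (by positivity)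
      _ = M * K * (π / 2) := by
          field_simp
          ring
      _ ≤ 100 * M * K := by nlinarith [Real.pi_le_four, mul_nonneg hM.le hK0]
  · -- the uniform bound
    rw [hUt, norm_smul, Real.norm_eq_abs,
      abs_of_pos (by positivity : (0:ℝ) < (4 * π)⁻¹)]
    have hn := MeasureTheory.norm_integral_le_lintegral_norm (μ := volume)
      (fun y : (ℝ × ℝ) × ℝ =>
        (Ω y.1 (ψ y.2) / d3 ((a, b), c) y) • ((y.1.2 - b, a - y.1.1) : ℝ × ℝ))
    have hval : ‖∫ y : (ℝ × ℝ) × ℝ,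
        (Ω y.1 (ψ y.2) / d3 ((a, b), c) y) • ((y.1.2 - b, a - y.1.1) : ℝ × ℝ)‖
        ≤ M * π * 32 := by
      refine le_trans hn (ENNReal.toReal_le_of_le_ofReal (by positivity) ?_)
      exact hfin1
    calc (4 * π)⁻¹ * ‖∫ y : (ℝ × ℝ) × ℝ,
        (Ω y.1 (ψ y.2) / d3 ((a, b), c) y) • ((y.1.2 - b, a - y.1.1) : ℝ × ℝ)‖
        ≤ (4 * π)⁻¹ * (M * π * 32) := mul_le_mul_of_nonneg_left hval (by positivity)
      _ = 8 * M := by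
          field_simp
          ring
      _ ≤ 100 * M := by nlinarith [hM]
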